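/- Let n ≥ 2, let U be an open subset of E = EuclideanSpace ℝ (Fin n), let Φ : U → ℝ be C¹ and u : U → ℝ be C². Define the vector field F : U → E by F(x) = exp((n−2)Φ(x))·( (‖∇u(x)‖²/2)·x − ⟨x, ∇u(x)⟩·∇u(x) ). Then for every x ∈ U, the divergence of F at x (the trace of the Fréchet derivative of F at x) equals exp((n−2)Φ(x))·( ((n−2)/2)·(1 + ⟨x, ∇Φ(x)⟩)·‖∇u(x)‖² − ⟨x, ∇u(x)⟩·( Δu(x) + (n−2)·⟨∇Φ(x), ∇u(x)⟩ ) ). -/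

import Mathlib

open MeasureTheory Metric Set RealInnerProductSpace

/-- The Hessian of `u` at `x`, as a bilinear form: second derivative in directions `v`, `w`. -/
noncomputable def hess {n : ℕ} (u : EuclideanSpace ℝ (Fin n) → ℝ)
    (x v w : EuclideanSpace ℝ (Fin n)) : ℝ :=
  fderiv ℝ (fun y => fderiv ℝ u y v) x w

/-- The Euclidean Laplacian of `u` at `x`: the trace of the second derivative. -/
noncomputable def lap {n : ℕ} (u : EuclideanSpace ℝ (Fin n) → ℝ)
    (x : EuclideanSpace ℝ (Fin n)) : ℝ :=
  ∑ i : Fin n, hess u x (EuclideanSpace.single i 1) (EuclideanSpace.single i 1)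

/-- The divergence of a vector field: the trace of its Fréchet derivative. -/
noncomputable def divergence {n : ℕ}
    (F : EuclideanSpace ℝ (Fin n) → EuclideanSpace ℝ (Fin n))
    (x : EuclideanSpace ℝ (Fin n)) : ℝ :=
  ∑ i : Fin n, fderiv ℝ F x (EuclideanSpace.single i 1) i

/-- An `ℝ`-linear continuous version of `(InnerProductSpace.toDual ℝ _).symm` on
`EuclideanSpace ℝ (Fin n)`. -/
noncomputable def Lmap (n : ℕ) :
    (EuclideanSpace ℝ (Fin n) →L[ℝ] ℝ) →L[ℝ] EuclideanSpace ℝ (Fin n) :=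
  (EuclideanSpace.equiv (Fin n) ℝ).symm.toContinuousLinearMap.comp
    (ContinuousLinearMap.pi fun i => ContinuousLinearMap.apply ℝ ℝ (EuclideanSpace.single i 1))

lemma Lmap_apply {n : ℕ} (φ : EuclideanSpace ℝ (Fin n) →L[ℝ] ℝ) (i : Fin n) :
    (Lmap n φ) i = φ (EuclideanSpace.single i 1) := rfl

lemma coord_eq_inner {n : ℕ} (a : EuclideanSpace ℝ (Fin n)) (i : Fin n) :
    a i = ⟪a, EuclideanSpace.single i 1⟫ := by simp [PiLp.inner_apply]

lemma Lmap_inner {n : ℕ} (φ : EuclideanSpace ℝ (Fin n) →L[ℝ] ℝ)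
    (w : EuclideanSpace ℝ (Fin n)) : ⟪Lmap n φ, w⟫ = φ w := by
  have hw : w = ∑ i, w i • EuclideanSpace.single i 1 := by
    have := (EuclideanSpace.basisFun (Fin n) ℝ).sum_repr w
    simpa [EuclideanSpace.basisFun_apply, EuclideanSpace.basisFun_repr] using this.symm
  rw [PiLp.inner_apply]
  conv_rhs => rw [hw]
  rw [map_sum]
  simp [Lmap_apply, mul_comm]

lemma grad_eq_Lmap {n : ℕ} (u : EuclideanSpace ℝ (Fin n) → ℝ) :
    gradient u = fun y => Lmap n (fderiv ℝ u y) := by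
  funext y
  apply PiLp.ext
  intro i
  rw [coord_eq_inner (gradient u y) i, coord_eq_inner (Lmap n (fderiv ℝ u y)) i, Lmap_inner]
  exact InnerProductSpace.toDual_symm_apply

lemma grad_inner {n : ℕ} (u : EuclideanSpace ℝ (Fin n) → ℝ)
    (y v : EuclideanSpace ℝ (Fin n)) : ⟪gradient u y, v⟫ = fderiv ℝ u y v :=
  InnerProductSpace.toDual_symm_apply

lemma sum_mul_coord {n : ℕ} (a b : EuclideanSpace ℝ (Fin n)) :
    ∑ i, a i * b i = ⟪a, b⟫ := by simp [PiLp.inner_apply, mul_comm]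

/-- Pohožaev-type divergence identity in rotationally symmetric spaces,
written in conformal coordinates with an arbitrary `C¹` weight `Φ`. -/
theorem stmt_4 {n : ℕ} (hn : 2 ≤ n) (U : Set (EuclideanSpace ℝ (Fin n))) (hU : IsOpen U)
    (Φ : EuclideanSpace ℝ (Fin n) → ℝ) (hΦ : ContDiffOn ℝ 1 Φ U)
    (u : EuclideanSpace ℝ (Fin n) → ℝ) (hu : ContDiffOn ℝ 2 u U)
    (F : EuclideanSpace ℝ (Fin n) → EuclideanSpace ℝ (Fin n))
    (hF : ∀ x, F x = Real.exp (((n : ℝ) - 2) * Φ x) •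
        ((‖gradient u x‖ ^ 2 / 2) • x - ⟪x, gradient u x⟫ • gradient u x)) :
    ∀ x ∈ U, divergence F x = Real.exp (((n : ℝ) - 2) * Φ x) *
      (((n : ℝ) - 2) / 2 * (1 + ⟪x, gradient Φ x⟫) * ‖gradient u x‖ ^ 2
        - ⟪x, gradient u x⟫ * (lap u x + ((n : ℝ) - 2) * ⟪gradient Φ x, gradient u x⟫)) := by
  intro x hx
  have hxU : U ∈ nhds x := hU.mem_nhds hx
  have hu2 : ContDiffAt ℝ 2 u x := hu.contDiffAt hxU
  have hΦd : DifferentiableAt ℝ Φ x := (hΦ.contDiffAt hxU).differentiableAt one_ne_zero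
  have hf1 : ContDiffAt ℝ 1 (fderiv ℝ u) x := hu2.fderiv_right le_rfl
  have hfd : DifferentiableAt ℝ (fderiv ℝ u) x := hf1.differentiableAt one_ne_zero
  have hsymmΨ : ∀ v w, fderiv ℝ (fderiv ℝ u) x v w = fderiv ℝ (fderiv ℝ u) x w v :=
    hu2.isSymmSndFDerivAt (by norm_num)
  set Ψ := fderiv ℝ (fderiv ℝ u) x with hΨdef
  set G : EuclideanSpace ℝ (Fin n) →L[ℝ] EuclideanSpace ℝ (Fin n) := (Lmap n).comp Ψ with hGdef
  have hgF : HasFDerivAt (gradient u) G x := by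
    rw [grad_eq_Lmap]
    exact (Lmap n).hasFDerivAt.comp x hfd.hasFDerivAt
  have hGinner : ∀ v w : EuclideanSpace ℝ (Fin n), ⟪G v, w⟫ = Ψ v w := fun v w => by
    rw [hGdef]; exact Lmap_inner _ _
  have hhess : ∀ v w, hess u x v w = Ψ w v := by
    intro v w
    have h1 : HasFDerivAt (fun y => fderiv ℝ u y v)
        ((ContinuousLinearMap.apply ℝ ℝ v).comp Ψ) x :=
      (ContinuousLinearMap.apply ℝ ℝ v).hasFDerivAt.comp x hfd.hasFDerivAt
    show fderiv ℝ (fun y => fderiv ℝ u y v) x w = Ψ w v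
    rw [h1.fderiv]; rfl
  -- derivative of F
  have hFe : F = fun y => Real.exp (((n : ℝ) - 2) * Φ y) •
      ((2⁻¹ * ⟪gradient u y, gradient u y⟫) • y - ⟪y, gradient u y⟫ • gradient u y) := by
    funext y
    rw [hF y, real_inner_self_eq_norm_sq, div_eq_inv_mul]
  have hidF : HasFDerivAt (fun y : EuclideanSpace ℝ (Fin n) => y)
      (ContinuousLinearMap.id ℝ _) x := hasFDerivAt_id x
  have hinF := (hgF.inner ℝ hgF).const_mul (2⁻¹ : ℝ)
  have hpF := hidF.inner ℝ hgF
  have hwF := (hinF.smul hidF).sub (hpF.smul hgF)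
  have hcF := (hΦd.hasFDerivAt.const_mul (((n : ℝ) - 2))).exp
  have hFF := hcF.smul hwF
  have hFd : HasFDerivAt F _ x :=
    hFF.congr_of_eventuallyEq (Filter.Eventually.of_forall fun y => by rw [hFe]; rfl)
  -- the i-th diagonal entry of the derivative of F
  have hterm : ∀ i : Fin n, fderiv ℝ F x (EuclideanSpace.single i 1) i
      = Real.exp (((n : ℝ) - 2) * Φ x) * (((n : ℝ) - 2) * (gradient Φ x) i) *
          (2⁻¹ * ⟪gradient u x, gradient u x⟫ * x i - ⟪x, gradient u x⟫ * (gradient u x) i)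
      + Real.exp (((n : ℝ) - 2) * Φ x) *
          (2⁻¹ * ⟪gradient u x, gradient u x⟫ + (G (gradient u x)) i * x i
            - ⟪x, gradient u x⟫ *
                hess u x (EuclideanSpace.single i 1) (EuclideanSpace.single i 1)
            - ((G x) i + (gradient u x) i) * (gradient u x) i) := by
    intro i
    have h1 : ∀ v : EuclideanSpace ℝ (Fin n), ⟪v, G (EuclideanSpace.single i 1)⟫ = (G v) i := by
      intro v
      rw [real_inner_comm, hGinner, hsymmΨ, ← hGinner]
      exact (coord_eq_inner (G v) i).symm
    have h2 : (G (EuclideanSpace.single i 1)) i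
        = hess u x (EuclideanSpace.single i 1) (EuclideanSpace.single i 1) := by
      rw [hhess]; rfl
    have h3 : ⟪EuclideanSpace.single i (1:ℝ), gradient u x⟫ = (gradient u x) i := by
      rw [real_inner_comm]; exact (coord_eq_inner (gradient u x) i).symm
    have h4 : fderiv ℝ Φ x (EuclideanSpace.single i 1) = (gradient Φ x) i := by
      rw [coord_eq_inner (gradient Φ x) i]
      exact (grad_inner Φ x _).symm
    rw [hFd.fderiv]
    simp only [ContinuousLinearMap.add_apply, ContinuousLinearMap.coe_smul', Pi.smul_apply,
      ContinuousLinearMap.smulRight_apply, ContinuousLinearMap.sub_apply,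
      ContinuousLinearMap.comp_apply, ContinuousLinearMap.prod_apply, fderivInnerCLM_apply,
      ContinuousLinearMap.id_apply, PiLp.smul_apply, PiLp.sub_apply, PiLp.add_apply,
      smul_eq_mul, Pi.sub_apply, Pi.smul_apply']
    have h1' : ∀ v : EuclideanSpace ℝ (Fin n), ⟪G (EuclideanSpace.single i 1), v⟫ = (G v) i := by
      intro v
      rw [hGinner, hsymmΨ, ← hGinner]
      exact (coord_eq_inner (G v) i).symm
    have h5 : (EuclideanSpace.single i (1:ℝ)) i = 1 := by simp
    simp only [h1, h1', h2, h3, h4, h5]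
    ring
  -- sum up
  have hdiv : divergence F x = ∑ i : Fin n,
      ((Real.exp (((n : ℝ) - 2) * Φ x) * (((n : ℝ) - 2)) *
          (2⁻¹ * ⟪gradient u x, gradient u x⟫)) * ((gradient Φ x) i * x i)
      - (Real.exp (((n : ℝ) - 2) * Φ x) * (((n : ℝ) - 2)) * ⟪x, gradient u x⟫) *
          ((gradient Φ x) i * (gradient u x) i)
      + Real.exp (((n : ℝ) - 2) * Φ x) * (2⁻¹ * ⟪gradient u x, gradient u x⟫)
      + Real.exp (((n : ℝ) - 2) * Φ x) * ((G (gradient u x)) i * x i)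
      - (Real.exp (((n : ℝ) - 2) * Φ x) * ⟪x, gradient u x⟫) *
          hess u x (EuclideanSpace.single i 1) (EuclideanSpace.single i 1)
      - Real.exp (((n : ℝ) - 2) * Φ x) * ((G x) i * (gradient u x) i)
      - Real.exp (((n : ℝ) - 2) * Φ x) * ((gradient u x) i * (gradient u x) i)) := by
    refine Finset.sum_congr rfl fun i _ => ?_
    rw [hterm i]; ring
  rw [hdiv]
  simp only [Finset.sum_add_distrib, Finset.sum_sub_distrib, ← Finset.mul_sum,
    Finset.sum_const, Finset.card_univ, Fintype.card_fin, nsmul_eq_mul]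
  rw [sum_mul_coord (gradient Φ x) x, sum_mul_coord (gradient Φ x) (gradient u x),
    sum_mul_coord (G (gradient u x)) x, sum_mul_coord (G x) (gradient u x),
    sum_mul_coord (gradient u x) (gradient u x)]
  have hlap : ∑ i : Fin n, hess u x (EuclideanSpace.single i 1) (EuclideanSpace.single i 1)
      = lap u x := rfl
  rw [hlap]
  have hcancel : ⟪G x, gradient u x⟫ = ⟪G (gradient u x), x⟫ := by
    rw [hGinner, hGinner]; exact hsymmΨ x (gradient u x)
  rw [hcancel, real_inner_comm (gradient Φ x) x, ← real_inner_self_eq_norm_sq]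
  ring
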